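/- A point x̄ ∈ X is a maximizer of (P) if and only if there exists a vector w in the (topological) interior of the dual cone C⁺ such that x̄ is an optimal solution of the weighted sum scalarized problem (P1(w)), i.e., wᵀPᵀx̄ ≥ wᵀPᵀx for all x ∈ X. -/

import Mathlib

open Matrix Pointwise

variable {E : Type*} [NormedAddCommGroup E] [NormedSpace ℝ E]
variable {ι : Type*} [Fintype ι]

/-- The finitely generated convex cone with generators `v`. -/
def coneSet (v : ι → E) : Set E := {x | ∃ μ : ι → ℝ, (∀ i, 0 ≤ μ i) ∧ x = ∑ i, μ i • v i}

lemma coneSet_convex (v : ι → E) : Convex ℝ (coneSet v) := by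
  rintro x ⟨μ, hμ, rfl⟩ y ⟨ν, hν, rfl⟩ a c ha hc _
  refine ⟨fun i => a * μ i + c * ν i, fun i => add_nonneg (mul_nonneg ha (hμ i)) (mul_nonneg hc (hν i)), ?_⟩
  simp only [add_smul, smul_smul, Finset.sum_add_distrib, Finset.smul_sum]

lemma zero_mem_coneSet (v : ι → E) : (0 : E) ∈ coneSet v :=
  ⟨0, fun _ => le_refl _, by simp⟩

lemma smul_mem_coneSet (v : ι → E) {x : E} (hx : x ∈ coneSet v) {c : ℝ} (hc : 0 ≤ c) :
    c • x ∈ coneSet v := by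
  obtain ⟨μ, hμ, rfl⟩ := hx
  exact ⟨fun i => c * μ i, fun i => mul_nonneg hc (hμ i), by
    simp [Finset.smul_sum, smul_smul]⟩

/-- Carathéodory-type reduction: any nonnegative combination can be rewritten with
linearly independent support. -/
lemma exists_indep_rep (v : ι → E) :
    ∀ (N : ℕ) (μ : ι → ℝ), (∀ i, 0 ≤ μ i) →
      (Finset.univ.filter fun i => μ i ≠ 0).card ≤ N →
      ∃ ν : ι → ℝ, (∀ i, 0 ≤ ν i) ∧ (∑ i, ν i • v i) = (∑ i, μ i • v i) ∧
        LinearIndependent ℝ (fun i : {i // ν i ≠ 0} => v i) := by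
  classical
  intro N
  induction N with
  | zero =>
    intro μ hμ hcard
    have hall : ∀ i, μ i = 0 := by
      intro i
      by_contra h
      have : i ∈ Finset.univ.filter fun i => μ i ≠ 0 := by simp [h]
      have := Finset.card_pos.mpr ⟨i, this⟩
      omega
    refine ⟨μ, hμ, rfl, ?_⟩
    have : IsEmpty {i // μ i ≠ 0} := ⟨fun x => x.2 (hall x.1)⟩
    exact linearIndependent_empty_type
  | succ N ih =>
    intro μ hμ hcard
    by_cases hind : LinearIndependent ℝ (fun i : {i // μ i ≠ 0} => v i)
    · exact ⟨μ, hμ, rfl, hind⟩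
    · obtain ⟨g, hgsum, i₁, hg₁⟩ := Fintype.not_linearIndependent_iff.mp hind
      -- wlog some positive coefficient
      obtain ⟨g, hgsum, i₁, hg₁⟩ :
          ∃ g : {i // μ i ≠ 0} → ℝ, (∑ i, g i • v i) = 0 ∧ ∃ i, 0 < g i := by
        rcases lt_or_gt_of_ne hg₁ with h | h
        · exact ⟨-g, by simpa [neg_smul] using congrArg Neg.neg hgsum, i₁, by simpa using h⟩
        · exact ⟨g, hgsum, i₁, h⟩
      set gh : ι → ℝ := fun i => if h : μ i ≠ 0 then g ⟨i, h⟩ else 0 with hgh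
      have hghsum : (∑ i : ι, gh i • v i) = 0 := by
        have h1 : (∑ i : ι, gh i • v i)
            = ∑ i ∈ (Finset.univ.filter fun i => μ i ≠ 0), gh i • v i :=
          (Finset.sum_subset (Finset.subset_univ _) (fun i _ hi => by
            simp [hgh, show μ i = 0 by simpa using hi])).symm
        have h2 : (∑ i ∈ (Finset.univ.filter fun i => μ i ≠ 0), gh i • v i)
            = ∑ i : {i // μ i ≠ 0}, gh i.1 • v i.1 :=
          Finset.sum_subtype _ (fun i => by simp) _
        rw [h1, h2, ← hgsum]
        refine Finset.sum_congr rfl fun i _ => ?_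
        simp [hgh, i.2]
      -- the positive-coefficient index set
      set T : Finset ι := Finset.univ.filter fun i => 0 < gh i with hT
      have hi₁T : (i₁ : ι) ∈ T := by
        simp only [hT, Finset.mem_filter, Finset.mem_univ, true_and]
        simpa [hgh, i₁.2] using hg₁
      obtain ⟨i₀, hi₀T, hi₀min⟩ :=
        Finset.exists_min_image T (fun i => μ i / gh i) ⟨i₁, hi₁T⟩
      have hgh₀ : 0 < gh i₀ := by simpa [hT] using hi₀T
      have hμ₀ : μ i₀ ≠ 0 := by
        intro h; simp [hgh, h] at hgh₀
      set t : ℝ := μ i₀ / gh i₀ with ht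
      have ht0 : 0 ≤ t := div_nonneg (hμ _) hgh₀.le
      set ν : ι → ℝ := fun i => μ i - t * gh i with hν
      have hνnn : ∀ i, 0 ≤ ν i := by
        intro i
        rcases le_or_gt (gh i) 0 with h | h
        · have : t * gh i ≤ 0 := mul_nonpos_of_nonneg_of_nonpos ht0 h
          simp only [hν]; linarith [hμ i]
        · have hiT : i ∈ T := by simp [hT, h]
          have := hi₀min i hiT
          have : t * gh i ≤ μ i := by
            rw [ht]
            calc μ i₀ / gh i₀ * gh i ≤ μ i / gh i * gh i := by
                  exact mul_le_mul_of_nonneg_right (hi₀min i hiT) h.le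
              _ = μ i := div_mul_cancel₀ _ h.ne'
          simp only [hν]; linarith
      have hsupp : ∀ i, ν i ≠ 0 → μ i ≠ 0 := by
        intro i h hc
        apply h
        simp [hν, hgh, hc]
      have hν₀ : ν i₀ = 0 := by
        simp only [hν, ht]
        field_simp
        ring
      have hcard' : (Finset.univ.filter fun i => ν i ≠ 0).card ≤ N := by
        have hss : (Finset.univ.filter fun i => ν i ≠ 0)
            ⊂ (Finset.univ.filter fun i => μ i ≠ 0) := by
          refine Finset.ssubset_iff_of_subset (fun i hi => ?_) |>.mpr ?_
          · simp only [Finset.mem_filter, Finset.mem_univ, true_and] at hi ⊢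
            exact hsupp i hi
          · exact ⟨i₀, by simp [hμ₀], by simp [hν₀]⟩
        have := Finset.card_lt_card hss
        omega
      have hsum' : (∑ i, ν i • v i) = ∑ i, μ i • v i := by
        have : (∑ i, ν i • v i) = (∑ i, μ i • v i) - t • (∑ i, gh i • v i) := by
          simp [hν, sub_smul, Finset.sum_sub_distrib, Finset.smul_sum, smul_smul]
        rw [this, hghsum, smul_zero, sub_zero]
      obtain ⟨ν', h1, h2, h3⟩ := ih ν hνnn hcard'
      exact ⟨ν', h1, h2.trans hsum', h3⟩

/-- The linear map sending coefficients supported on `s` to their combination. -/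
noncomputable def comboMap (v : ι → E) (s : Finset ι) : (s → ℝ) →ₗ[ℝ] E where
  toFun μ := ∑ i : s, μ i • v i
  map_add' μ ν := by simp [add_smul, Finset.sum_add_distrib]
  map_smul' c μ := by simp [smul_smul, Finset.smul_sum]

set_option maxHeartbeats 1000000 in
lemma coneSet_isClosed (v : ι → E) [FiniteDimensional ℝ E] : IsClosed (coneSet v) := by
  classical
  have key : coneSet v = ⋃ s ∈ {s : Finset ι | LinearIndependent ℝ (fun i : s => v i)},
      (comboMap v s) '' {μ : s → ℝ | ∀ i, 0 ≤ μ i} := by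
    ext x
    constructor
    · rintro ⟨μ, hμ, rfl⟩
      obtain ⟨ν, hν, hsum, hind⟩ := exists_indep_rep v _ μ hμ le_rfl
      set s : Finset ι := Finset.univ.filter fun i => ν i ≠ 0 with hs
      have hindS : LinearIndependent ℝ (fun i : s => v i) := by
        have h := hind.comp
          (fun i : {x // x ∈ s} =>
            (⟨i.1, (Finset.mem_filter.mp i.2).2⟩ : {i // ν i ≠ 0}))
          (fun a b hab => Subtype.ext (by simpa using congrArg Subtype.val hab))
        exact h
      have hcomb : comboMap v s (fun i => ν i.1) = ∑ i, μ i • v i := by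
        change ∑ i : s, ν i.1 • v i = _
        rw [← hsum]
        rw [← Finset.sum_subtype s
          (fun i => by rw [hs, Finset.mem_filter]) (fun i => ν i • v i)]
        exact Finset.sum_subset (Finset.subset_univ _) (fun i _ hi => by
          have : ν i = 0 := by simpa [hs] using hi
          simp [this])
      exact Set.mem_biUnion hindS ⟨fun i => ν i.1, fun i => hν i.1, hcomb⟩
    · intro hx
      simp only [Set.mem_iUnion, Set.mem_image, Set.mem_setOf_eq] at hx
      obtain ⟨S, hSind, μ, hμ, rfl⟩ := hx
      refine ⟨fun i => if h : i ∈ S then μ ⟨i, h⟩ else 0, fun i => ?_, ?_⟩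
      · by_cases h : i ∈ S <;> simp [h, hμ]
      · have h1 : (∑ i : ι, (if h : i ∈ S then μ ⟨i, h⟩ else 0) • v i)
            = ∑ i ∈ S, (if h : i ∈ S then μ ⟨i, h⟩ else 0) • v i :=
          (Finset.sum_subset (Finset.subset_univ S) (fun i _ hi => by simp [hi])).symm
        have h2 : (∑ i ∈ S, (if h : i ∈ S then μ ⟨i, h⟩ else 0) • v i)
            = ∑ i : S, (if h : (i : ι) ∈ S then μ ⟨i, h⟩ else 0) • v (i : ι) :=
          Finset.sum_subtype S (fun i => Iff.rfl) _
        change ∑ i : S, μ i • v i = _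
        rw [h1, h2]
        exact (Finset.sum_congr rfl fun i _ => by simp [i.2]).symm
  rw [key]
  refine Set.Finite.isClosed_biUnion (Set.toFinite _) fun s hs => ?_
  have hinj : LinearMap.ker (comboMap v s) = ⊥ := by
    rw [LinearMap.ker_eq_bot]
    intro a b hab
    have : (∑ i : s, (a i - b i) • v i) = 0 := by
      simp only [sub_smul, Finset.sum_sub_distrib]
      simpa [comboMap, sub_eq_zero] using hab
    have := Fintype.linearIndependent_iff.mp hs _ this
    funext i
    have hi := this i
    linarith [this i]
  have hemb := LinearMap.isClosedEmbedding_of_injective (f := comboMap v s) hinj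
  refine hemb.isClosedMap _ ?_
  have : {μ : s → ℝ | ∀ i, 0 ≤ μ i} = ⋂ i : s, {μ : s → ℝ | 0 ≤ μ i} := by
    ext μ; simp [Set.mem_iInter]
  rw [this]
  exact isClosed_iInter fun i => isClosed_le continuous_const (continuous_apply i)

/-- Farkas-type separation from a finitely generated cone. -/
lemma farkas_sep (v : ι → E) [FiniteDimensional ℝ E] {e : E} (he : e ∉ coneSet v) :
    ∃ f : E →L[ℝ] ℝ, (∀ x ∈ coneSet v, f x ≤ 0) ∧ 0 < f e := by
  obtain ⟨f, u, hfu, hue⟩ :=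
    geometric_hahn_banach_closed_point (coneSet_convex v) (coneSet_isClosed v) he
  have hu : 0 < u := by simpa using hfu 0 (zero_mem_coneSet v)
  refine ⟨f, fun x hx => ?_, by
    have := hfu 0 (zero_mem_coneSet v); simp at this; linarith⟩
  by_contra h
  push_neg at h
  have hc : 0 ≤ u / f x := le_of_lt (div_pos hu h)
  have := hfu _ (smul_mem_coneSet v hx (le_of_lt (div_pos hu h)))
  rw [ContinuousLinearMap.map_smul] at this
  simp only [smul_eq_mul] at this
  rw [div_mul_cancel₀ _ (ne_of_gt h)] at this
  exact lt_irrefl _ this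

set_option maxHeartbeats 1600000 in
/-- Proposition 2.5 (maximizer case): x̄ ∈ X is a maximizer of (P) iff it is an
optimal solution of the weighted sum scalarized problem (P1(w)) for some
w in the interior of the dual cone C⁺. -/
theorem maximizer_iff_optimal_for_interior_weight
    (n m q : ℕ) (hn : 0 < n) (hm : 0 < m) (hq : 0 < q)
    (P : Matrix (Fin n) (Fin q) ℝ) (A : Matrix (Fin m) (Fin n) ℝ) (b : Fin m → ℝ)
    (C : Set (Fin q → ℝ))
    (hC0 : {(0 : Fin q → ℝ)} ⊂ C) (hCuniv : C ≠ Set.univ)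
    (hCpoly : ∃ (k : ℕ) (Y : Fin k → Fin q → ℝ),
      C = {v | ∃ μ : Fin k → ℝ, (∀ i, 0 ≤ μ i) ∧ v = ∑ i, μ i • Y i})
    (hCpointed : ∀ v ∈ C, -v ∈ C → v = 0)
    (hCsolid : (interior C).Nonempty)
    (X : Set (Fin n → ℝ)) (hX : X = {x | A.mulVec x ≤ b ∧ 0 ≤ x})
    (xbar : Fin n → ℝ) (hxbar : xbar ∈ X) :
    (({P.transpose.mulVec xbar} + (C \ {0})) ∩ (P.transpose.mulVec '' X) = ∅)
      ↔ ∃ w ∈ interior {z : Fin q → ℝ | ∀ y ∈ C, 0 ≤ z ⬝ᵥ y},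
          ∀ x ∈ X, w ⬝ᵥ P.transpose.mulVec x ≤ w ⬝ᵥ P.transpose.mulVec xbar := by
  classical
  constructor
  · intro hmax
    obtain ⟨k, Y, hCeq⟩ := hCpoly
    -- L1 norms of the generators of C
    set cst : Fin k → ℝ := fun i => ∑ l, |Y i l| with hcst
    have hcst_nonneg : ∀ i, 0 ≤ cst i := fun i => Finset.sum_nonneg fun l _ => abs_nonneg _
    -- the big finitely generated cone
    set v : ((Fin n ⊕ Fin m) ⊕ (Fin k ⊕ Unit)) → (Fin q → ℝ) × ((Fin m → ℝ) × ℝ) :=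
      Sum.elim
        (Sum.elim (fun j => ((fun l => P j l), ((fun i => A i j), (0:ℝ))))
                  (fun i => (0, (Pi.single i 1, 0))))
        (Sum.elim (fun i => (-(Y i), (0, cst i)))
                  (fun _ => (-(P.transpose.mulVec xbar), (-b, 0)))) with hv
    -- the fundamental sum computation
    have hsumc : ∀ (x : Fin n → ℝ) (s : Fin m → ℝ) (μ : Fin k → ℝ) (t : ℝ),
        (∑ i, (Sum.elim (Sum.elim x s) (Sum.elim μ (fun _ => t)) i) • v i)
          = (P.transpose.mulVec x - (∑ i, μ i • Y i) - t • P.transpose.mulVec xbar,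
             (A.mulVec x + s - t • b, ∑ i, μ i * cst i)) := by
      intro x s μ t
      rw [Fintype.sum_sum_type, Fintype.sum_sum_type, Fintype.sum_sum_type]
      simp only [hv, Sum.elim_inl, Sum.elim_inr]
      refine Prod.ext ?_ (Prod.ext ?_ ?_)
      · simp only [Prod.fst_add, Prod.fst_sum, Prod.smul_fst]
        funext l
        simp only [Pi.add_apply, Pi.sub_apply, Finset.sum_apply, Pi.smul_apply,
          smul_eq_mul, Pi.neg_apply, Pi.zero_apply, Fintype.sum_unique,
          Matrix.mulVec, dotProduct, Matrix.transpose_apply]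
        rw [Finset.sum_congr rfl (fun j _ => mul_comm (x j) (P j l))]
        ring_nf
        simp only [Finset.sum_neg_distrib, Finset.sum_const_zero]
        ring
      · simp only [Prod.snd_add, Prod.snd_sum, Prod.smul_snd,
          Prod.fst_add, Prod.fst_sum, Prod.smul_fst]
        funext i
        simp only [Pi.add_apply, Pi.sub_apply, Finset.sum_apply, Pi.smul_apply,
          smul_eq_mul, Pi.neg_apply, Pi.zero_apply, Fintype.sum_unique,
          Matrix.mulVec, dotProduct, Pi.single_apply, mul_ite, mul_one, mul_zero,
          Finset.sum_ite_eq, Finset.mem_univ, if_true, Finset.sum_const_zero]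
        rw [Finset.sum_congr rfl (fun j _ => mul_comm (x j) (A i j))]
        ring
      · simp only [Prod.snd_add, Prod.snd_sum, Prod.smul_snd, smul_eq_mul,
          Fintype.sum_unique, mul_zero, Finset.sum_const_zero]
        ring
    -- the target point to separate
    set e : (Fin q → ℝ) × ((Fin m → ℝ) × ℝ) := (0, (0, 1)) with he
    -- membership facts about C
    have hCmem : ∀ (μ : Fin k → ℝ), (∀ i, 0 ≤ μ i) → (∑ i, μ i • Y i) ∈ C := by
      intro μ hμ; rw [hCeq]; exact ⟨μ, hμ, rfl⟩
    -- a nonzero nonneg combination with positive weight on a nonzero generator is nonzero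
    have hnonzero : ∀ (μ : Fin k → ℝ), (∀ i, 0 ≤ μ i) → (∑ i, μ i * cst i) ≠ 0 →
        (∑ i, μ i • Y i) ≠ 0 := by
      intro μ hμ hpos h0
      obtain ⟨i₀, -, hi₀⟩ := Finset.exists_ne_zero_of_sum_ne_zero hpos
      have hμi₀ : μ i₀ ≠ 0 := fun h => hi₀ (by simp [h])
      have hYi₀ : Y i₀ ≠ 0 := by
        intro h
        apply hi₀
        simp [hcst, h]
      have ha : μ i₀ • Y i₀ ≠ 0 := smul_ne_zero hμi₀ hYi₀
      have haC : μ i₀ • Y i₀ ∈ C := by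
        have := hCmem (fun i => if i = i₀ then μ i₀ else 0)
          (fun i => by by_cases h : i = i₀ <;> simp [h, hμ i₀])
        simpa using this
      have hdC : (∑ i, (if i = i₀ then 0 else μ i) • Y i) ∈ C :=
        hCmem _ (fun i => by by_cases h : i = i₀ <;> simp [h, hμ i])
      have hsplit : μ i₀ • Y i₀ + (∑ i, (if i = i₀ then 0 else μ i) • Y i)
          = ∑ i, μ i • Y i := by
        have hterm : ∀ i, (if i = i₀ then 0 else μ i) • Y i
            = μ i • Y i - (if i = i₀ then μ i₀ else 0) • Y i := by
          intro i; by_cases h : i = i₀ <;> simp [h]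
        simp only [hterm, Finset.sum_sub_distrib]
        have h2 : (∑ i, (if i = i₀ then μ i₀ else 0) • Y i) = μ i₀ • Y i₀ := by
          rw [Finset.sum_eq_single i₀ (fun i _ h => by simp [h])
            (fun h => absurd (Finset.mem_univ i₀) h)]
          simp
        rw [h2]
        abel
      have hneg : -(μ i₀ • Y i₀) ∈ C := by
        have : (∑ i, (if i = i₀ then 0 else μ i) • Y i) = -(μ i₀ • Y i₀) := by
          rw [eq_neg_iff_add_eq_zero, add_comm, hsplit, h0]
        rwa [← this]
      exact ha (hCpointed _ haC hneg)
    have hCsmul : ∀ (r : ℝ), 0 ≤ r → ∀ c ∈ C, r • c ∈ C := by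
      intro r hr c hc
      rw [hCeq] at hc ⊢
      obtain ⟨μ, hμ, rfl⟩ := hc
      exact ⟨fun i => r * μ i, fun i => mul_nonneg hr (hμ i),
        by simp [Finset.smul_sum, smul_smul]⟩
    have hxbar' := hxbar
    rw [hX] at hxbar'
    obtain ⟨hAxbar, hxbar0⟩ := hxbar'
    -- Step 1: e is not in the cone
    have heC : e ∉ coneSet v := by
      rintro ⟨cc, hccn, hce⟩
      set x : Fin n → ℝ := fun j => cc (Sum.inl (Sum.inl j)) with hxdef
      set s : Fin m → ℝ := fun i => cc (Sum.inl (Sum.inr i)) with hsdef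
      set μ : Fin k → ℝ := fun i => cc (Sum.inr (Sum.inl i)) with hμdef
      set t : ℝ := cc (Sum.inr (Sum.inr ())) with htdef
      have hccdef : cc = Sum.elim (Sum.elim x s) (Sum.elim μ fun _ => t) := by
        funext i
        rcases i with (j | i) | (i | u)
        · rfl
        · rfl
        · rfl
        · cases u; rfl
      rw [hccdef, hsumc] at hce
      rw [Prod.ext_iff] at hce
      obtain ⟨h1, h23⟩ := hce
      rw [Prod.ext_iff] at h23
      obtain ⟨h2, h3⟩ := h23
      simp only [he] at h1 h2 h3
      have ht0 : 0 ≤ t := hccn _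
      have hx0 : ∀ j, 0 ≤ x j := fun j => hccn _
      have hs0 : ∀ i, 0 ≤ s i := fun i => hccn _
      have hμ0 : ∀ i, 0 ≤ μ i := fun i => hccn _
      have hsum_ne : (∑ i, μ i * cst i) ≠ 0 := by rw [← h3]; norm_num
      set cvec := ∑ i, μ i • Y i with hcvec
      have hcvC : cvec ∈ C := hCmem μ hμ0
      have hcv0 : cvec ≠ 0 := hnonzero μ hμ0 hsum_ne
      have hPx : P.transpose.mulVec x = cvec + t • P.transpose.mulVec xbar := by
        have h := h1.symm
        rw [sub_sub] at h
        exact sub_eq_zero.mp h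
      have hAx : A.mulVec x + s = t • b := sub_eq_zero.mp h2.symm
      rcases eq_or_lt_of_le ht0 with ht | ht
      · -- t = 0
        have hxX' : xbar + x ∈ X := by
          rw [hX]
          refine ⟨?_, ?_⟩
          · intro i
            have hA := congrFun hAx i
            simp only [Pi.add_apply, Pi.smul_apply, smul_eq_mul, ← ht, zero_mul] at hA
            have := hAxbar i
            rw [Matrix.mulVec_add]
            simp only [Pi.add_apply]
            have hsi := hs0 i
            linarith
          · intro j
            exact add_nonneg (hxbar0 j) (hx0 j)
        have hPt : P.transpose.mulVec (xbar + x) = P.transpose.mulVec xbar + cvec := by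
          rw [Matrix.mulVec_add, hPx, ← ht, zero_smul, add_zero]
        exact Set.eq_empty_iff_forall_notMem.mp hmax _
          ⟨Set.mem_add.mpr ⟨_, Set.mem_singleton _, cvec, ⟨hcvC, hcv0⟩, rfl⟩,
           ⟨xbar + x, hxX', hPt⟩⟩
      · -- 0 < t
        have hxX' : t⁻¹ • x ∈ X := by
          rw [hX]
          refine ⟨?_, ?_⟩
          · intro i
            have hA := congrFun hAx i
            simp only [Pi.add_apply, Pi.smul_apply, smul_eq_mul] at hA
            rw [Matrix.mulVec_smul]
            simp only [Pi.smul_apply, smul_eq_mul]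
            rw [inv_mul_le_iff₀ ht]
            have hsi := hs0 i
            linarith
          · intro j
            simp only [Pi.smul_apply, smul_eq_mul]
            exact mul_nonneg (inv_nonneg.mpr ht.le) (hx0 j)
        have hPt : P.transpose.mulVec (t⁻¹ • x)
            = P.transpose.mulVec xbar + t⁻¹ • cvec := by
          rw [Matrix.mulVec_smul, hPx, smul_add, smul_smul,
            inv_mul_cancel₀ ht.ne', one_smul, add_comm]
        have hc'C : t⁻¹ • cvec ∈ C := hCsmul _ (inv_nonneg.mpr ht.le) _ hcvC
        have hc'0 : t⁻¹ • cvec ≠ 0 := smul_ne_zero (inv_ne_zero ht.ne') hcv0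
        exact Set.eq_empty_iff_forall_notMem.mp hmax _
          ⟨Set.mem_add.mpr ⟨_, Set.mem_singleton _, t⁻¹ • cvec, ⟨hc'C, hc'0⟩, rfl⟩,
           ⟨t⁻¹ • x, hxX', hPt⟩⟩
    -- Step 2: separate e from the cone
    obtain ⟨f, hfle, hfe⟩ := farkas_sep v heC
    set τ : ℝ := f e with hτ
    have hτpos : 0 < τ := hfe
    set g : (Fin q → ℝ) →L[ℝ] ℝ :=
      f.comp (ContinuousLinearMap.inl ℝ (Fin q → ℝ) ((Fin m → ℝ) × ℝ)) with hg
    have hgval : ∀ a : Fin q → ℝ, g a = f (a, (0, 0)) := by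
      intro a; rw [hg]; rfl
    set w : Fin q → ℝ := fun l => τ⁻¹ * g (Pi.single l 1 : Fin q → ℝ) with hw
    have hdot : ∀ a : Fin q → ℝ, w ⬝ᵥ a = τ⁻¹ * g a := by
      intro a
      have ha : a = ∑ l, a l • (Pi.single l 1 : Fin q → ℝ) := by
        funext j
        simp [Pi.single_apply, Finset.sum_apply, mul_ite, Finset.sum_ite_eq]
      conv_rhs => rw [ha]
      rw [map_sum, Finset.mul_sum, dotProduct]
      refine Finset.sum_congr rfl fun l _ => ?_
      rw [hw, ContinuousLinearMap.map_smul]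
      simp only [smul_eq_mul]
      ring
    -- optimality of xbar for the weight w
    have hgX : ∀ x ∈ X, g (P.transpose.mulVec x - P.transpose.mulVec xbar) ≤ 0 := by
      intro x hxX
      have hxX2 := hxX
      rw [hX] at hxX2
      obtain ⟨hAx, hx0⟩ := hxX2
      have hmem : ((P.transpose.mulVec x - P.transpose.mulVec xbar,
          ((0 : Fin m → ℝ), (0:ℝ)))) ∈ coneSet v := by
        refine ⟨Sum.elim (Sum.elim x (b - A.mulVec x))
          (Sum.elim (0 : Fin k → ℝ) fun _ => (1:ℝ)), ?_, ?_⟩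
        · intro i
          rcases i with (j | i) | (i | u)
          · exact hx0 j
          · simp only [Sum.elim_inl, Sum.elim_inr, Pi.sub_apply]
            have := hAx i
            simp only [Pi.sub_apply, sub_nonneg]
            exact this
          · simp
          · exact zero_le_one
        · rw [hsumc]
          refine Prod.ext ?_ (Prod.ext ?_ ?_) <;> simp
      have h := hfle _ hmem
      rw [← hgval] at h
      exact h
    -- generator inequalities
    have hgY : ∀ i, cst i * τ ≤ g (Y i) := by
      intro i
      have hmem : ((-(Y i) : Fin q → ℝ), ((0 : Fin m → ℝ), cst i)) ∈ coneSet v := by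
        refine ⟨Sum.elim (Sum.elim 0 0)
          (Sum.elim (Pi.single i 1) fun _ => (0:ℝ)), ?_, ?_⟩
        · intro j
          rcases j with (j | j) | (j | u)
          · simp
          · simp
          · simp only [Sum.elim_inr, Sum.elim_inl]
            rcases eq_or_ne j i with rfl | hji
            · simp
            · simp [Pi.single_eq_of_ne hji]
          · simp
        · rw [hsumc]
          refine Prod.ext ?_ (Prod.ext ?_ ?_)
          · have hsum : (∑ j, (Pi.single i 1 : Fin k → ℝ) j • Y j) = Y i := by
              rw [Finset.sum_eq_single i (fun j _ hji => by
                simp [Pi.single_apply, hji]) (fun h => absurd (Finset.mem_univ i) h)]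
              simp
            simp [hsum]
          · simp
          · have : ∀ j, (Pi.single i 1 : Fin k → ℝ) j * cst j = if j = i then cst i else 0 := by
              intro j
              rcases eq_or_ne j i with rfl | hji
              · simp
              · simp [Pi.single_apply, hji]
            simp only [this]
            simp
      have h := hfle _ hmem
      have hdecomp : ((-(Y i) : Fin q → ℝ), ((0 : Fin m → ℝ), cst i))
          = ((-(Y i) : Fin q → ℝ), ((0 : Fin m → ℝ), (0:ℝ))) + cst i • e := by
        rw [he]
        refine Prod.ext ?_ (Prod.ext ?_ ?_) <;> simp
      rw [hdecomp, map_add, ContinuousLinearMap.map_smul] at h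
      rw [← hgval, map_neg] at h
      simp only [smul_eq_mul, ← hτ] at h
      linarith
    refine ⟨w, ?_, ?_⟩
    · -- w lies in the interior of the dual cone
      apply mem_interior.mpr
      refine ⟨Metric.ball w 1, ?_, Metric.isOpen_ball, Metric.mem_ball_self one_pos⟩
      intro w' hw'
      intro y hyC
      rw [hCeq] at hyC
      obtain ⟨μ, hμ, rfl⟩ := hyC
      set Sc : ℝ := ∑ i, μ i * cst i with hSc
      have hSc0 : 0 ≤ Sc := Finset.sum_nonneg fun i _ =>
        mul_nonneg (hμ i) (hcst_nonneg i)
      -- w ⬝ y ≥ Sc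
      have hwy : Sc ≤ w ⬝ᵥ (∑ i, μ i • Y i) := by
        rw [hdot, map_sum]
        have : (∑ i, μ i * cst i) * τ ≤ ∑ i, g (μ i • Y i) := by
          rw [Finset.sum_mul]
          refine Finset.sum_le_sum fun i _ => ?_
          rw [ContinuousLinearMap.map_smul, smul_eq_mul]
          calc μ i * cst i * τ = μ i * (cst i * τ) := by ring
            _ ≤ μ i * g (Y i) := mul_le_mul_of_nonneg_left (hgY i) (hμ i)
        have h2 : Sc = τ⁻¹ * (Sc * τ) := by
          field_simp
        rw [h2]
        exact mul_le_mul_of_nonneg_left this (inv_nonneg.mpr hτpos.le)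
      -- |(w' - w) ⬝ y| ≤ dist * Sc
      have hl1 : (∑ l, |(∑ i, μ i • Y i) l|) ≤ Sc := by
        calc (∑ l, |(∑ i, μ i • Y i) l|)
            ≤ ∑ l, ∑ i, |μ i * Y i l| := by
              refine Finset.sum_le_sum fun l _ => ?_
              simp only [Finset.sum_apply, Pi.smul_apply, smul_eq_mul]
              exact Finset.abs_sum_le_sum_abs _ _
          _ = ∑ i, ∑ l, |μ i * Y i l| := Finset.sum_comm
          _ = Sc := by
              rw [hSc]
              refine Finset.sum_congr rfl fun i _ => ?_
              simp only [hcst]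
              calc (∑ l, |μ i * Y i l|) = ∑ l, μ i * |Y i l| := by
                    refine Finset.sum_congr rfl fun l _ => ?_
                    rw [abs_mul, abs_of_nonneg (hμ i)]
                _ = μ i * ∑ l, |Y i l| := by rw [Finset.mul_sum]
      have hdiff : |(w' - w) ⬝ᵥ (∑ i, μ i • Y i)| ≤ dist w' w * Sc := by
        rw [dotProduct]
        calc |∑ l, (w' - w) l * (∑ i, μ i • Y i) l|
            ≤ ∑ l, |(w' - w) l * (∑ i, μ i • Y i) l| := Finset.abs_sum_le_sum_abs _ _
          _ ≤ ∑ l, dist w' w * |(∑ i, μ i • Y i) l| := by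
              refine Finset.sum_le_sum fun l _ => ?_
              rw [abs_mul]
              refine mul_le_mul_of_nonneg_right ?_ (abs_nonneg _)
              have := norm_le_pi_norm (w' - w) l
              rw [dist_eq_norm]
              simpa [Real.norm_eq_abs] using this
          _ = dist w' w * ∑ l, |(∑ i, μ i • Y i) l| := by rw [Finset.mul_sum]
          _ ≤ dist w' w * Sc := mul_le_mul_of_nonneg_left hl1 dist_nonneg
      have hdlt : dist w' w < 1 := Metric.mem_ball.mp hw'
      have hsplit : w' ⬝ᵥ (∑ i, μ i • Y i)
          = w ⬝ᵥ (∑ i, μ i • Y i) + (w' - w) ⬝ᵥ (∑ i, μ i • Y i) := by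
        rw [sub_dotProduct]
        ring
      rw [hsplit]
      have habs := abs_le.mp hdiff
      nlinarith [habs.1, dist_nonneg (x := w') (y := w)]
    · -- optimality
      intro x hxX
      have h := hgX x hxX
      have hd := hdot (P.transpose.mulVec x - P.transpose.mulVec xbar)
      rw [dotProduct_sub] at hd
      have : τ⁻¹ * g (P.transpose.mulVec x - P.transpose.mulVec xbar) ≤ 0 :=
        mul_nonpos_of_nonneg_of_nonpos (inv_nonneg.mpr hτpos.le) h
      linarith
  · rintro ⟨w, hwint, hwopt⟩
    rw [Set.eq_empty_iff_forall_notMem]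
    rintro z ⟨hz1, hz2⟩
    rw [Set.mem_add] at hz1
    obtain ⟨p, hp, c, hc, rfl⟩ := hz1
    rw [Set.mem_singleton_iff] at hp
    subst hp
    obtain ⟨hcC, hc0⟩ := hc
    rw [Set.mem_singleton_iff] at hc0
    obtain ⟨x, hxX, hxz⟩ := hz2
    -- from optimality: w ⬝ c ≤ 0
    have hwc_le : w ⬝ᵥ c ≤ 0 := by
      have := hwopt x hxX
      rw [hxz, dotProduct_add] at this
      linarith
    -- from interior membership: w ⬝ c > 0
    obtain ⟨ε, hε, hball⟩ := Metric.mem_nhds_iff.mp (mem_interior_iff_mem_nhds.mp hwint)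
    obtain ⟨l, hl⟩ := Function.ne_iff.mp hc0
    set u : Fin q → ℝ := Pi.single l (if 0 ≤ c l then (1:ℝ) else -1) with hu
    have huc : u ⬝ᵥ c = |c l| := by
      have hterm : ∀ i, u i * c i = if i = l then |c l| else 0 := by
        intro i
        rcases eq_or_ne i l with rfl | h
        · rcases le_or_gt 0 (c i) with h0 | h0
          · simp [hu, h0, abs_of_nonneg h0]
          · simp [hu, not_le.mpr h0, abs_of_neg h0]
        · simp [hu, Pi.single_eq_of_ne h, h]
      rw [dotProduct]
      simp only [hterm]
      simp
    have hunorm : ‖u‖ ≤ 1 := by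
      rw [hu]
      refine (pi_norm_le_iff_of_nonneg zero_le_one).mpr fun i => ?_
      rcases eq_or_ne i l with rfl | h
      · simp only [Pi.single_eq_same, Real.norm_eq_abs]
        by_cases h0 : 0 ≤ c i <;> simp [h0]
      · simp [Pi.single_eq_of_ne h]
    have hw' : w - (ε/2) • u ∈ {z : Fin q → ℝ | ∀ y ∈ C, 0 ≤ z ⬝ᵥ y} := by
      apply hball
      rw [Metric.mem_ball, dist_eq_norm]
      have : w - (ε/2) • u - w = -((ε/2) • u) := by abel
      rw [this, norm_neg, norm_smul, Real.norm_eq_abs, abs_of_pos (by linarith)]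
      nlinarith
    have := hw' c hcC
    rw [sub_dotProduct, smul_dotProduct, huc, smul_eq_mul] at this
    have habs : 0 < |c l| := abs_pos.mpr hl
    nlinarith
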